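/- Monopoly equilibrium without price differentiation (Theorem 4): Consider the two-AP linear market with cross-interference coefficients a, b > 0 satisfying a + b < 2 and inverse demand u(x) = w − s·x, w, s > 0. Then the common price t = w/2 is the unique maximizer over t ∈ [0,∞) of the total profit t·(x_1^WE(t,t) + x_2^WE(t,t)). Moreover, if additionally a ≤ 1 and b ≤ 1, the resulting Wardrop equilibrium is x^WE(w/2, w/2) = (1/2)·M^{-1}(w·𝟏), where M = [[1+s, a+s],[b+s, 1+s]]. -/

import Mathlib

set_option maxHeartbeats 1000000


open Matrix

/-- A flow vector `x ∈ [0,∞)²` is a Wardrop equilibrium of the two-AP linear market with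
cross-interference coefficients `a, b`, inverse demand `u x = w - s x`, and prices
`p = (p₁, p₂)`. -/
def IsLinWE (a b w s : ℝ) (p x : ℝ × ℝ) : Prop :=
  0 ≤ x.1 ∧ 0 ≤ x.2 ∧
  (0 < x.1 → p.1 + (x.1 + a * x.2) = w - s * (x.1 + x.2)) ∧
  (x.1 = 0 → w - s * (x.1 + x.2) ≤ p.1 + (x.1 + a * x.2)) ∧
  (0 < x.2 → p.2 + (b * x.1 + x.2) = w - s * (x.1 + x.2)) ∧
  (x.2 = 0 → w - s * (x.1 + x.2) ≤ p.2 + (b * x.1 + x.2))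

/-- **Monopoly equilibrium without price differentiation (Theorem 4).**
The common price `t = w/2` is the unique maximizer over `t ∈ [0,∞)` of the total profit
`t · (x₁^WE(t,t) + x₂^WE(t,t))`; moreover, if additionally `a ≤ 1` and `b ≤ 1`, the
resulting Wardrop equilibrium is `x^WE(w/2, w/2) = (1/2) · M⁻¹ (w·𝟏)`, where
`M = [[1+s, a+s],[b+s, 1+s]]`. -/
lemma linWE_unique (a b w s : ℝ) (ha : 0 < a) (hb : 0 < b) (hab : a + b < 2)
    (hs : 0 < s) (p x y : ℝ × ℝ)
    (hx : IsLinWE a b w s p x) (hy : IsLinWE a b w s p y) : x = y := by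
  obtain ⟨hx1, hx2, hxe1, hxi1, hxe2, hxi2⟩ := hx
  obtain ⟨hy1, hy2, hye1, hyi1, hye2, hyi2⟩ := hy
  have hBx1 : 0 ≤ (1+s)*x.1 + (a+s)*x.2 - (w - p.1) := by
    rcases eq_or_lt_of_le hx1 with h | h
    · have := hxi1 h.symm; linarith
    · have := hxe1 h; linarith
  have hBx2 : 0 ≤ (b+s)*x.1 + (1+s)*x.2 - (w - p.2) := by
    rcases eq_or_lt_of_le hx2 with h | h
    · have := hxi2 h.symm; linarith
    · have := hxe2 h; linarith
  have hBy1 : 0 ≤ (1+s)*y.1 + (a+s)*y.2 - (w - p.1) := by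
    rcases eq_or_lt_of_le hy1 with h | h
    · have := hyi1 h.symm; linarith
    · have := hye1 h; linarith
  have hBy2 : 0 ≤ (b+s)*y.1 + (1+s)*y.2 - (w - p.2) := by
    rcases eq_or_lt_of_le hy2 with h | h
    · have := hyi2 h.symm; linarith
    · have := hye2 h; linarith
  have hCx1 : x.1 * ((1+s)*x.1 + (a+s)*x.2 - (w - p.1)) = 0 := by
    rcases eq_or_lt_of_le hx1 with h | h
    · rw [← h]; ring
    · have hz : (1+s)*x.1 + (a+s)*x.2 - (w - p.1) = 0 := by have := hxe1 h; linarith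
      rw [hz, mul_zero]
  have hCx2 : x.2 * ((b+s)*x.1 + (1+s)*x.2 - (w - p.2)) = 0 := by
    rcases eq_or_lt_of_le hx2 with h | h
    · rw [← h]; ring
    · have hz : (b+s)*x.1 + (1+s)*x.2 - (w - p.2) = 0 := by have := hxe2 h; linarith
      rw [hz, mul_zero]
  have hCy1 : y.1 * ((1+s)*y.1 + (a+s)*y.2 - (w - p.1)) = 0 := by
    rcases eq_or_lt_of_le hy1 with h | h
    · rw [← h]; ring
    · have hz : (1+s)*y.1 + (a+s)*y.2 - (w - p.1) = 0 := by have := hye1 h; linarith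
      rw [hz, mul_zero]
  have hCy2 : y.2 * ((b+s)*y.1 + (1+s)*y.2 - (w - p.2)) = 0 := by
    rcases eq_or_lt_of_le hy2 with h | h
    · rw [← h]; ring
    · have hz : (b+s)*y.1 + (1+s)*y.2 - (w - p.2) = 0 := by have := hye2 h; linarith
      rw [hz, mul_zero]
  have hE : (x.1 - y.1) * ((1+s)*(x.1-y.1) + (a+s)*(x.2-y.2))
      + (x.2 - y.2) * ((b+s)*(x.1-y.1) + (1+s)*(x.2-y.2)) ≤ 0 := by
    linarith [mul_nonneg hx1 hBy1, mul_nonneg hy1 hBx1, mul_nonneg hx2 hBy2,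
      mul_nonneg hy2 hBx2, hCx1, hCx2, hCy1, hCy2]
  have h0' : (2 - a - b) * ((x.1 - y.1)^2 + (x.2 - y.2)^2) ≤ 0 := by
    linarith [hE, mul_nonneg (show (0:ℝ) ≤ a+b+2*s by linarith)
      (sq_nonneg (x.1 - y.1 + x.2 - y.2))]
  have hd : (0:ℝ) < 2 - a - b := by linarith
  have h0 : (x.1 - y.1)^2 + (x.2 - y.2)^2 ≤ 0 := by
    by_contra hcon
    push_neg at hcon
    nlinarith [mul_pos hd hcon]
  have hu : (x.1 - y.1)^2 = 0 := le_antisymm (by nlinarith [sq_nonneg (x.2 - y.2)]) (sq_nonneg _)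
  have hv : (x.2 - y.2)^2 = 0 := le_antisymm (by nlinarith [sq_nonneg (x.1 - y.1)]) (sq_nonneg _)
  have h1 : x.1 = y.1 := by
    have := pow_eq_zero_iff (n := 2) (by norm_num) |>.mp hu
    linarith [sub_eq_zero.mp this]
  have h2 : x.2 = y.2 := by
    have := pow_eq_zero_iff (n := 2) (by norm_num) |>.mp hv
    linarith [sub_eq_zero.mp this]
  exact Prod.ext h1 h2


lemma isLinWE_mk (a b w s t x1 x2 : ℝ) (h1 : 0 ≤ x1) (h2 : 0 ≤ x2)
    (h3 : 0 < x1 → t + (x1 + a * x2) = w - s * (x1 + x2))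
    (h4 : x1 = 0 → w - s * (x1 + x2) ≤ t + (x1 + a * x2))
    (h5 : 0 < x2 → t + (b * x1 + x2) = w - s * (x1 + x2))
    (h6 : x2 = 0 → w - s * (x1 + x2) ≤ t + (b * x1 + x2)) :
    IsLinWE a b w s (t, t) (x1, x2) := ⟨h1, h2, h3, h4, h5, h6⟩

theorem monopoly_equilibrium_without_price_differentiation
    (a b w s : ℝ) (ha : 0 < a) (hb : 0 < b) (hab : a + b < 2)
    (hw : 0 < w) (hs : 0 < s)
    (xWE : ℝ × ℝ → ℝ × ℝ)
    (hxWE : ∀ p : ℝ × ℝ, 0 ≤ p.1 → 0 ≤ p.2 → IsLinWE a b w s p (xWE p))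
    (M : Matrix (Fin 2) (Fin 2) ℝ) (hMdef : M = !![1 + s, a + s; b + s, 1 + s]) :
    (∀ t : ℝ, 0 ≤ t → t ≠ w / 2 →
      t * ((xWE (t, t)).1 + (xWE (t, t)).2) <
        (w / 2) * ((xWE (w / 2, w / 2)).1 + (xWE (w / 2, w / 2)).2)) ∧
    (a ≤ 1 → b ≤ 1 →
      xWE (w / 2, w / 2) =
        (((1 / 2 : ℝ) • M⁻¹.mulVec (fun _ => w)) 0,
         ((1 / 2 : ℝ) • M⁻¹.mulVec (fun _ => w)) 1)) := by
  have huniq := linWE_unique a b w s ha hb hab hs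
  have h1s : (0:ℝ) < 1 + s := by linarith
  obtain ⟨c, hc, hsum⟩ : ∃ c : ℝ, 0 < c ∧ ∀ t : ℝ, 0 ≤ t →
      (xWE (t, t)).1 + (xWE (t, t)).2 = c * max (w - t) 0 := by
    rcases lt_or_ge a 1 with ha1 | ha1
    · rcases lt_or_ge b 1 with hb1 | hb1
      · -- a < 1, b < 1; interior equilibrium
        have hDpos : 0 < (1+s)*(1-a) + (a+s)*(1-b) := by
          have h1 := mul_pos h1s (show (0:ℝ) < 1-a by linarith)
          have h2 := mul_pos (show (0:ℝ) < a+s by linarith) (show (0:ℝ) < 1-b by linarith)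
          linarith
        refine ⟨(2-a-b)/((1+s)*(1-a) + (a+s)*(1-b)), div_pos (by linarith) hDpos, fun t ht => ?_⟩
        have hcand : IsLinWE a b w s (t, t)
            ((1-a)/((1+s)*(1-a) + (a+s)*(1-b)) * max (w-t) 0,
             (1-b)/((1+s)*(1-a) + (a+s)*(1-b)) * max (w-t) 0) := by
          refine isLinWE_mk a b w s t _ _
            (mul_nonneg (div_nonneg (by linarith) hDpos.le) (le_max_right _ _))
            (mul_nonneg (div_nonneg (by linarith) hDpos.le) (le_max_right _ _)) ?_ ?_ ?_ ?_
          · intro h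
            rcases le_or_gt w t with hwt | hwt
            · rw [max_eq_right (by linarith : w - t ≤ 0), mul_zero] at h
              exact absurd h (lt_irrefl 0)
            · rw [max_eq_left (by linarith : (0:ℝ) ≤ w - t)]
              field_simp
              ring
          · intro h
            rcases le_or_gt w t with hwt | hwt
            · rw [max_eq_right (by linarith : w - t ≤ 0), mul_zero, mul_zero]
              linarith
            · exfalso
              have hpos : 0 < (1-a)/((1+s)*(1-a) + (a+s)*(1-b)) * max (w-t) 0 :=
                mul_pos (div_pos (by linarith) hDpos)
                  (by rw [max_eq_left (by linarith : (0:ℝ) ≤ w - t)]; linarith)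
              linarith [h ▸ hpos]
          · intro h
            rcases le_or_gt w t with hwt | hwt
            · rw [max_eq_right (by linarith : w - t ≤ 0), mul_zero] at h
              exact absurd h (lt_irrefl 0)
            · rw [max_eq_left (by linarith : (0:ℝ) ≤ w - t)]
              field_simp
              ring
          · intro h
            rcases le_or_gt w t with hwt | hwt
            · rw [max_eq_right (by linarith : w - t ≤ 0), mul_zero, mul_zero]
              linarith
            · exfalso
              have hpos : 0 < (1-b)/((1+s)*(1-a) + (a+s)*(1-b)) * max (w-t) 0 :=
                mul_pos (div_pos (by linarith) hDpos)
                  (by rw [max_eq_left (by linarith : (0:ℝ) ≤ w - t)]; linarith)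
              linarith [h ▸ hpos]
        have heq := huniq (t, t) _ _ (hxWE (t, t) ht ht) hcand
        rw [heq]
        ring
      · -- a < 1 ≤ b; corner equilibrium x2 = 0
        refine ⟨1/(1+s), by positivity, fun t ht => ?_⟩
        have hcand : IsLinWE a b w s (t, t) (1/(1+s) * max (w-t) 0, 0) := by
          refine isLinWE_mk a b w s t _ _
            (mul_nonneg (by positivity) (le_max_right _ _)) le_rfl ?_ ?_ ?_ ?_
          · intro h
            rcases le_or_gt w t with hwt | hwt
            · rw [max_eq_right (by linarith : w - t ≤ 0), mul_zero] at h
              exact absurd h (lt_irrefl 0)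
            · rw [max_eq_left (by linarith : (0:ℝ) ≤ w - t)]
              field_simp
              ring
          · intro h
            rcases le_or_gt w t with hwt | hwt
            · rw [max_eq_right (by linarith : w - t ≤ 0), mul_zero]
              linarith
            · exfalso
              have hpos : 0 < 1/(1+s) * max (w-t) 0 :=
                mul_pos (by positivity)
                  (by rw [max_eq_left (by linarith : (0:ℝ) ≤ w - t)]; linarith)
              linarith [h ▸ hpos]
          · intro h
            exact absurd h (lt_irrefl 0)
          · intro _
            rcases le_or_gt w t with hwt | hwt
            · rw [max_eq_right (by linarith : w - t ≤ 0), mul_zero]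
              linarith
            · rw [max_eq_left (by linarith : (0:ℝ) ≤ w - t)]
              have hA : 0 ≤ (1+s)⁻¹ * (b-1) * (w-t) :=
                mul_nonneg (mul_nonneg (inv_nonneg.mpr h1s.le) (by linarith)) (by linarith)
              have hB : (w-t) * ((1+s)⁻¹ * (1+s)) = (w-t) := by
                rw [inv_mul_cancel₀ h1s.ne']; ring
              have hone : 1/(1+s) = (1+s)⁻¹ := one_div _
              rw [hone]
              linarith [hA, hB]
        have heq := huniq (t, t) _ _ (hxWE (t, t) ht ht) hcand
        rw [heq]
        ring
    · -- 1 ≤ a (then b < 1); corner equilibrium x1 = 0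
      refine ⟨1/(1+s), by positivity, fun t ht => ?_⟩
      have hcand : IsLinWE a b w s (t, t) (0, 1/(1+s) * max (w-t) 0) := by
        refine isLinWE_mk a b w s t _ _
          le_rfl (mul_nonneg (by positivity) (le_max_right _ _)) ?_ ?_ ?_ ?_
        · intro h
          exact absurd h (lt_irrefl 0)
        · intro _
          rcases le_or_gt w t with hwt | hwt
          · rw [max_eq_right (by linarith : w - t ≤ 0), mul_zero]
            linarith
          · rw [max_eq_left (by linarith : (0:ℝ) ≤ w - t)]
            have hA : 0 ≤ (1+s)⁻¹ * (a-1) * (w-t) :=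
              mul_nonneg (mul_nonneg (inv_nonneg.mpr h1s.le) (by linarith)) (by linarith)
            have hB : (w-t) * ((1+s)⁻¹ * (1+s)) = (w-t) := by
              rw [inv_mul_cancel₀ h1s.ne']; ring
            have hone : 1/(1+s) = (1+s)⁻¹ := one_div _
            rw [hone]
            linarith [hA, hB]
        · intro h
          rcases le_or_gt w t with hwt | hwt
          · rw [max_eq_right (by linarith : w - t ≤ 0), mul_zero] at h
            exact absurd h (lt_irrefl 0)
          · rw [max_eq_left (by linarith : (0:ℝ) ≤ w - t)]
            field_simp
            ring
        · intro h
          rcases le_or_gt w t with hwt | hwt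
          · rw [max_eq_right (by linarith : w - t ≤ 0), mul_zero]
            linarith
          · exfalso
            have hpos : 0 < 1/(1+s) * max (w-t) 0 :=
              mul_pos (by positivity)
                (by rw [max_eq_left (by linarith : (0:ℝ) ≤ w - t)]; linarith)
            linarith [h ▸ hpos]
      have heq := huniq (t, t) _ _ (hxWE (t, t) ht ht) hcand
      rw [heq]
      ring
  constructor
  · -- the maximizer part
    intro t ht hne
    rw [hsum t ht, hsum (w/2) (by linarith)]
    rw [max_eq_left (by linarith : (0:ℝ) ≤ w - w/2)]
    rcases le_or_gt w t with hwt | hwt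
    · rw [max_eq_right (by linarith : w - t ≤ 0), mul_zero, mul_zero]
      exact mul_pos (by linarith) (mul_pos hc (by linarith))
    · rw [max_eq_left (by linarith : (0:ℝ) ≤ w - t)]
      have hne' : t - w/2 ≠ 0 := sub_ne_zero.mpr hne
      have hsq : 0 < (t - w/2)^2 := (sq_nonneg _).lt_of_ne (Ne.symm (pow_ne_zero 2 hne'))
      nlinarith [mul_pos hc hsq]
  · -- the matrix formula part
    intro ha1 hb1
    have hab1 : a * b ≤ 1 := by nlinarith
    have hdet : 0 < 1 + 2*s - a*s - b*s - a*b := by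
      have := mul_pos hs (show (0:ℝ) < 2 - a - b by linarith)
      nlinarith
    have E1 : w/2 + (w*(1-a)/(2*(1 + 2*s - a*s - b*s - a*b))
        + a * (w*(1-b)/(2*(1 + 2*s - a*s - b*s - a*b))))
        = w - s * (w*(1-a)/(2*(1 + 2*s - a*s - b*s - a*b))
        + w*(1-b)/(2*(1 + 2*s - a*s - b*s - a*b))) := by
      generalize hG : (1 + 2*s - a*s - b*s - a*b) = D at hdet ⊢
      field_simp [hdet.ne']
      rw [← hG]; ring
    have E2 : w/2 + (b * (w*(1-a)/(2*(1 + 2*s - a*s - b*s - a*b)))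
        + w*(1-b)/(2*(1 + 2*s - a*s - b*s - a*b)))
        = w - s * (w*(1-a)/(2*(1 + 2*s - a*s - b*s - a*b))
        + w*(1-b)/(2*(1 + 2*s - a*s - b*s - a*b))) := by
      generalize hG : (1 + 2*s - a*s - b*s - a*b) = D at hdet ⊢
      field_simp [hdet.ne']
      rw [← hG]; ring
    have hcand : IsLinWE a b w s (w/2, w/2)
        (w*(1-a)/(2*(1 + 2*s - a*s - b*s - a*b)),
         w*(1-b)/(2*(1 + 2*s - a*s - b*s - a*b))) :=
      isLinWE_mk a b w s (w/2) _ _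
        (div_nonneg (mul_nonneg hw.le (by linarith)) (by linarith))
        (div_nonneg (mul_nonneg hw.le (by linarith)) (by linarith))
        (fun _ => E1) (fun _ => le_of_eq E1.symm)
        (fun _ => E2) (fun _ => le_of_eq E2.symm)
    have heq := huniq (w/2, w/2) _ _ (hxWE (w/2, w/2) (by linarith) (by linarith)) hcand
    rw [heq, hMdef]
    have hdet2 : (1 + s) * (1 + s) - (a + s) * (b + s) ≠ 0 := by nlinarith
    refine Prod.ext ?_ ?_
    · simp [Matrix.inv_def, Matrix.adjugate_fin_two, Matrix.det_fin_two_of,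
        Matrix.mulVec, dotProduct, Fin.sum_univ_two, Ring.inverse_eq_inv']
      field_simp
      ring
    · simp [Matrix.inv_def, Matrix.adjugate_fin_two, Matrix.det_fin_two_of,
        Matrix.mulVec, dotProduct, Fin.sum_univ_two, Ring.inverse_eq_inv']
      field_simp
      ring
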